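/- arXiv:1805.10166 — 3 statements merged into one kernel-verified Lean document; each statement's English description precedes it below -/
import Mathlib

section
/- For p > 4 the integral ∫₀^∞ [ ∫_ℝ ( (1+v)^{-1/2} e^{−z²/(4(1+v))} − v^{-1/2} e^{−z²/(4v)} )² dz ]^{p/(p−2)} dv is finite. -/
open MeasureTheory

namespace Stmt5Aux

open Real

lemma rpow_neg_half_eq {x : ℝ} (hx : 0 < x) : x ^ (-(1:ℝ)/2) = (Real.sqrt x)⁻¹ := by
  rw [Real.sqrt_eq_rpow, ← Real.rpow_neg hx.le]
  norm_num

lemma gauss_pt {a b : ℝ} (ha : 0 < a) (hb : 0 < b) (z : ℝ) :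
    (a ^ (-(1:ℝ)/2) * Real.exp (-z^2/(4*a))) * (b ^ (-(1:ℝ)/2) * Real.exp (-z^2/(4*b)))
      = (a ^ (-(1:ℝ)/2) * b ^ (-(1:ℝ)/2)) * Real.exp (-((a+b)/(4*a*b)) * z^2) := by
  rw [mul_mul_mul_comm, ← Real.exp_add]
  congr 1
  field_simp
  ring

lemma gauss_integrable {a b : ℝ} (ha : 0 < a) (hb : 0 < b) :
    Integrable (fun z : ℝ =>
      (a ^ (-(1:ℝ)/2) * Real.exp (-z^2/(4*a))) * (b ^ (-(1:ℝ)/2) * Real.exp (-z^2/(4*b)))) := by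
  simp_rw [gauss_pt ha hb]
  exact (integrable_exp_neg_mul_sq (by positivity)).const_mul _

lemma gauss_prod {a b : ℝ} (ha : 0 < a) (hb : 0 < b) :
    (∫ z : ℝ, (a ^ (-(1:ℝ)/2) * Real.exp (-z^2/(4*a))) * (b ^ (-(1:ℝ)/2) * Real.exp (-z^2/(4*b))))
      = 2 * Real.sqrt π * (Real.sqrt (a+b))⁻¹ := by
  have hab : 0 < a + b := by linarith
  have sa := Real.sqrt_pos.mpr ha
  have sb := Real.sqrt_pos.mpr hb
  have sab := Real.sqrt_pos.mpr hab
  simp_rw [gauss_pt ha hb]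
  rw [MeasureTheory.integral_const_mul, integral_gaussian]
  have h1 : π / ((a+b)/(4*a*b)) = (2*Real.sqrt π*Real.sqrt a*Real.sqrt b/Real.sqrt (a+b))^2 := by
    rw [div_pow, mul_pow, mul_pow, mul_pow, Real.sq_sqrt pi_pos.le, Real.sq_sqrt ha.le,
      Real.sq_sqrt hb.le, Real.sq_sqrt hab.le]
    field_simp
    ring
  rw [h1, Real.sqrt_sq (by positivity), rpow_neg_half_eq ha, rpow_neg_half_eq hb]
  field_simp

lemma inner_eq {v : ℝ} (hv : 0 < v) :
    (∫ z : ℝ, ((1 + v) ^ (-(1:ℝ)/2) * Real.exp (-z ^ 2 / (4 * (1 + v))) -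
        v ^ (-(1:ℝ)/2) * Real.exp (-z ^ 2 / (4 * v))) ^ 2)
    = 2 * Real.sqrt π *
        ((Real.sqrt (2+2*v))⁻¹ - 2*(Real.sqrt (1+2*v))⁻¹ + (Real.sqrt (2*v))⁻¹) := by
  have h1v : 0 < 1 + v := by linarith
  set X : ℝ → ℝ := fun z => (1 + v) ^ (-(1:ℝ)/2) * Real.exp (-z ^ 2 / (4 * (1 + v))) with hX
  set Y : ℝ → ℝ := fun z => v ^ (-(1:ℝ)/2) * Real.exp (-z ^ 2 / (4 * v)) with hY
  have hpt : ∀ z : ℝ, (X z - Y z) ^ 2 = X z * X z - 2 * (X z * Y z) + Y z * Y z := by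
    intro z; ring
  have J1 : Integrable (fun z => X z * X z) := gauss_integrable h1v h1v
  have J2 : Integrable (fun z => X z * Y z) := gauss_integrable h1v hv
  have J3 : Integrable (fun z => Y z * Y z) := gauss_integrable hv hv
  calc (∫ z : ℝ, (X z - Y z) ^ 2)
      = ∫ z : ℝ, (X z * X z - 2 * (X z * Y z) + Y z * Y z) := by simp_rw [hpt]
    _ = (∫ z : ℝ, X z * X z) - 2 * (∫ z : ℝ, X z * Y z) + (∫ z : ℝ, Y z * Y z) := by
        have Jsub : Integrable (fun z => X z * X z - 2 * (X z * Y z)) := J1.sub (J2.const_mul 2)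
        rw [integral_add Jsub J3, integral_sub J1 (J2.const_mul 2),
          MeasureTheory.integral_const_mul]
    _ = 2 * Real.sqrt π * (Real.sqrt ((1+v)+(1+v)))⁻¹
          - 2 * (2 * Real.sqrt π * (Real.sqrt ((1+v)+v))⁻¹)
          + 2 * Real.sqrt π * (Real.sqrt (v+v))⁻¹ := by
        rw [gauss_prod h1v h1v, gauss_prod h1v hv, gauss_prod hv hv]
    _ = 2 * Real.sqrt π *
        ((Real.sqrt (2+2*v))⁻¹ - 2*(Real.sqrt (1+2*v))⁻¹ + (Real.sqrt (2*v))⁻¹) := by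
        rw [show (1+v)+(1+v) = 2+2*v by ring, show (1+v)+v = 1+2*v by ring,
          show v+v = 2*v by ring]
        ring

lemma sqrt_inv_diff {x : ℝ} (hx : 0 < x) :
    0 ≤ (Real.sqrt x)⁻¹ - (Real.sqrt (x+1))⁻¹ ∧
    (Real.sqrt x)⁻¹ - (Real.sqrt (x+1))⁻¹ ≤ ((Real.sqrt x)⁻¹)^3 / 2 := by
  have hx1 : (0:ℝ) < x + 1 := by linarith
  have hs := Real.sqrt_pos.mpr hx
  have ht := Real.sqrt_pos.mpr hx1
  have hs2 := Real.sq_sqrt hx.le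
  have ht2 := Real.sq_sqrt hx1.le
  have hts : Real.sqrt x ≤ Real.sqrt (x+1) := Real.sqrt_le_sqrt (by linarith)
  set s := Real.sqrt x
  set t := Real.sqrt (x+1)
  have h2 : (t - s) * (t + s) = 1 := by nlinarith
  constructor
  · have : s⁻¹ ≥ t⁻¹ := by
      apply inv_anti₀ hs hts
    linarith
  · have h1 : s⁻¹ - t⁻¹ = (t - s)/(s*t) := by field_simp
    have h3 : ((s:ℝ)⁻¹)^3 / 2 = 1/(2*s^3) := by field_simp
    rw [h1, h3, div_le_div_iff₀ (by positivity) (by positivity)]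
    nlinarith [mul_nonneg (mul_nonneg hs.le (sq_nonneg (t - s)))
      (by positivity : (0:ℝ) ≤ t + 2*s), mul_pos hs ht]

noncomputable def Gfun (v : ℝ) : ℝ :=
  2 * Real.sqrt π *
    ((Real.sqrt (2+2*v))⁻¹ - 2*(Real.sqrt (1+2*v))⁻¹ + (Real.sqrt (2*v))⁻¹)

lemma sqrt_pi_le_two : Real.sqrt π ≤ 2 := by
  rw [show (2:ℝ) = Real.sqrt 4 by rw [show (4:ℝ) = 2^2 by norm_num, Real.sqrt_sq]; norm_num]
  exact Real.sqrt_le_sqrt (by linarith [Real.pi_le_four])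

lemma sqrt_inv_anti {x y : ℝ} (hx : 0 < x) (hxy : x ≤ y) :
    (Real.sqrt y)⁻¹ ≤ (Real.sqrt x)⁻¹ :=
  inv_anti₀ (Real.sqrt_pos.mpr hx) (Real.sqrt_le_sqrt hxy)

lemma Gfun_abs_le_small {v : ℝ} (hv : 0 < v) : |Gfun v| ≤ 16 * v ^ (-(1:ℝ)/2) := by
  rw [rpow_neg_half_eq hv]
  have h0 : (0:ℝ) < Real.sqrt v := Real.sqrt_pos.mpr hv
  have hA : (Real.sqrt (2+2*v))⁻¹ ≤ (Real.sqrt v)⁻¹ := sqrt_inv_anti hv (by linarith)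
  have hB : (Real.sqrt (1+2*v))⁻¹ ≤ (Real.sqrt v)⁻¹ := sqrt_inv_anti hv (by linarith)
  have hC : (Real.sqrt (2*v))⁻¹ ≤ (Real.sqrt v)⁻¹ := sqrt_inv_anti hv (by linarith)
  have hA0 : 0 ≤ (Real.sqrt (2+2*v))⁻¹ := by positivity
  have hB0 : 0 ≤ (Real.sqrt (1+2*v))⁻¹ := by positivity
  have hC0 : 0 ≤ (Real.sqrt (2*v))⁻¹ := by positivity
  have hπ : 0 ≤ Real.sqrt π := Real.sqrt_nonneg _
  have hπ2 := sqrt_pi_le_two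
  rw [Gfun, abs_mul]
  rw [abs_of_nonneg (by positivity : (0:ℝ) ≤ 2 * Real.sqrt π)]
  have habs : |(Real.sqrt (2+2*v))⁻¹ - 2*(Real.sqrt (1+2*v))⁻¹ + (Real.sqrt (2*v))⁻¹|
      ≤ 4 * (Real.sqrt v)⁻¹ := by
    rw [abs_le]
    constructor <;> nlinarith
  nlinarith

lemma Gfun_abs_le_large {v : ℝ} (hv : 0 < v) : |Gfun v| ≤ 2 * v ^ (-(3:ℝ)/2) := by
  have h2v : (0:ℝ) < 2*v := by linarith
  have h2v1 : (0:ℝ) < 2*v+1 := by linarith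
  have hd1 := sqrt_inv_diff h2v
  have hd2 := sqrt_inv_diff h2v1
  have hsv : (0:ℝ) < Real.sqrt v := Real.sqrt_pos.mpr hv
  have hcube : ((Real.sqrt (2*v))⁻¹)^3 ≤ ((Real.sqrt v)⁻¹)^3 :=
    pow_le_pow_left₀ (by positivity) (sqrt_inv_anti hv (by linarith : v ≤ 2*v)) 3
  have hcube2 : ((Real.sqrt (2*v+1))⁻¹)^3 ≤ ((Real.sqrt (2*v))⁻¹)^3 :=
    pow_le_pow_left₀ (by positivity) (sqrt_inv_anti h2v (by linarith : 2*v ≤ 2*v+1)) 3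
  have hrw : v ^ (-(3:ℝ)/2) = ((Real.sqrt v)⁻¹)^3 := by
    rw [show (-(3:ℝ)/2) = (-(1:ℝ)/2) * (3:ℕ) by norm_num, Real.rpow_mul hv.le,
      Real.rpow_natCast, rpow_neg_half_eq hv]
  rw [hrw, Gfun, abs_mul, abs_of_nonneg (by positivity : (0:ℝ) ≤ 2 * Real.sqrt π)]
  have hargs : (Real.sqrt (2+2*v))⁻¹ - 2*(Real.sqrt (1+2*v))⁻¹ + (Real.sqrt (2*v))⁻¹
      = ((Real.sqrt (2*v))⁻¹ - (Real.sqrt (2*v+1))⁻¹)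
        - ((Real.sqrt (2*v+1))⁻¹ - (Real.sqrt ((2*v+1)+1))⁻¹) := by
    rw [show (2:ℝ)+2*v = (2*v+1)+1 by ring, show (1:ℝ)+2*v = 2*v+1 by ring]
    ring
  rw [hargs]
  have habs : |((Real.sqrt (2*v))⁻¹ - (Real.sqrt (2*v+1))⁻¹)
        - ((Real.sqrt (2*v+1))⁻¹ - (Real.sqrt ((2*v+1)+1))⁻¹)|
      ≤ ((Real.sqrt v)⁻¹)^3 / 2 := by
    rw [abs_le]
    constructor <;> nlinarith [hd1.1, hd1.2, hd2.1, hd2.2]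
  have hπ2 := sqrt_pi_le_two
  have hπ : 0 ≤ Real.sqrt π := Real.sqrt_nonneg _
  have hc3 : 0 ≤ ((Real.sqrt v)⁻¹)^3 := by positivity
  nlinarith [abs_nonneg (((Real.sqrt (2*v))⁻¹ - (Real.sqrt (2*v+1))⁻¹)
        - ((Real.sqrt (2*v+1))⁻¹ - (Real.sqrt ((2*v+1)+1))⁻¹))]

lemma Gfun_continuousOn : ContinuousOn Gfun (Set.Ioi (0:ℝ)) := by
  have c1 : Continuous fun v : ℝ => Real.sqrt (2+2*v) := by continuity
  have c2 : Continuous fun v : ℝ => Real.sqrt (1+2*v) := by continuity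
  have c3 : Continuous fun v : ℝ => Real.sqrt (2*v) := by continuity
  unfold Gfun
  apply ContinuousOn.mul continuousOn_const
  apply ContinuousOn.add
  apply ContinuousOn.sub
  · exact c1.continuousOn.inv₀ fun v hv =>
      ne_of_gt (Real.sqrt_pos.mpr (by simp only [Set.mem_Ioi] at hv; linarith))
  · exact continuousOn_const.mul (c2.continuousOn.inv₀ fun v hv =>
      ne_of_gt (Real.sqrt_pos.mpr (by simp only [Set.mem_Ioi] at hv; linarith)))
  · exact c3.continuousOn.inv₀ fun v hv =>
      ne_of_gt (Real.sqrt_pos.mpr (by simp only [Set.mem_Ioi] at hv; linarith))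

end Stmt5Aux

open Stmt5Aux

/-- For `p > 4`, the scale-invariant integral
`∫₀^∞ [ ∫_ℝ ( (1+v)^{-1/2} e^{−z²/(4(1+v))} − v^{-1/2} e^{−z²/(4v)} )² dz ]^{p/(p−2)} dv`
is finite. -/
theorem stmt5 (p : ℝ) (hp : 4 < p) :
    IntegrableOn
      (fun v : ℝ =>
        (∫ z : ℝ,
            ((1 + v) ^ (-(1:ℝ)/2) * Real.exp (-z ^ 2 / (4 * (1 + v))) -
              v ^ (-(1:ℝ)/2) * Real.exp (-z ^ 2 / (4 * v))) ^ 2) ^ (p / (p - 2)))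
      (Set.Ioi (0:ℝ)) := by
  have hp2 : 0 < p - 2 := by linarith
  set q := p / (p - 2) with hq
  have hq1 : 1 < q := (one_lt_div hp2).mpr (by linarith)
  have hq2 : q < 2 := by rw [hq, div_lt_iff₀ hp2]; linarith
  have hq0 : (0:ℝ) < q := by linarith
  have hGint : IntegrableOn (fun v : ℝ => Gfun v ^ q) (Set.Ioi (0:ℝ)) := by
    have hcont : ContinuousOn (fun v : ℝ => Gfun v ^ q) (Set.Ioi (0:ℝ)) :=
      Gfun_continuousOn.rpow_const (fun v hv => Or.inr hq0.le)
    rw [← Set.Ioc_union_Ioi_eq_Ioi (zero_le_one : (0:ℝ) ≤ 1)]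
    apply MeasureTheory.IntegrableOn.union
    · -- Ioc 0 1
      have hdom : IntegrableOn (fun v : ℝ => (16:ℝ)^q * v ^ ((-(1:ℝ)/2) * q))
          (Set.Ioc (0:ℝ) 1) := by
        apply Integrable.const_mul
        have h := intervalIntegral.intervalIntegrable_rpow' (a := (0:ℝ)) (b := 1)
          (r := (-(1:ℝ)/2) * q) (by nlinarith)
        exact (intervalIntegrable_iff_integrableOn_Ioc_of_le zero_le_one).mp h
      apply Integrable.mono' hdom
        ((hcont.mono Set.Ioc_subset_Ioi_self).aestronglyMeasurable measurableSet_Ioc)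
      filter_upwards [ae_restrict_mem measurableSet_Ioc] with v hv
      have hv0 : 0 < v := hv.1
      have h1 : ‖Gfun v ^ q‖ ≤ |Gfun v| ^ q := Real.abs_rpow_le_abs_rpow _ _
      have h2 : |Gfun v| ^ q ≤ (16 * v ^ (-(1:ℝ)/2)) ^ q :=
        Real.rpow_le_rpow (abs_nonneg _) (Gfun_abs_le_small hv0) hq0.le
      have h3 : (16 * v ^ (-(1:ℝ)/2)) ^ q = (16:ℝ)^q * v ^ ((-(1:ℝ)/2) * q) := by
        rw [Real.mul_rpow (by norm_num) (by positivity), Real.rpow_mul hv0.le]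
      calc ‖Gfun v ^ q‖ ≤ (16 * v ^ (-(1:ℝ)/2)) ^ q := le_trans h1 h2
        _ = (16:ℝ)^q * v ^ ((-(1:ℝ)/2) * q) := h3
    · -- Ioi 1
      have hdom : IntegrableOn (fun v : ℝ => (2:ℝ)^q * v ^ ((-(3:ℝ)/2) * q))
          (Set.Ioi (1:ℝ)) := by
        apply Integrable.const_mul
        exact integrableOn_Ioi_rpow_of_lt (by nlinarith) one_pos
      apply Integrable.mono' hdom
        ((hcont.mono (Set.Ioi_subset_Ioi zero_le_one)).aestronglyMeasurable measurableSet_Ioi)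
      filter_upwards [ae_restrict_mem measurableSet_Ioi] with v hv
      have hv0 : (0:ℝ) < v := lt_trans one_pos hv
      have h1 : ‖Gfun v ^ q‖ ≤ |Gfun v| ^ q := Real.abs_rpow_le_abs_rpow _ _
      have h2 : |Gfun v| ^ q ≤ (2 * v ^ (-(3:ℝ)/2)) ^ q :=
        Real.rpow_le_rpow (abs_nonneg _) (Gfun_abs_le_large hv0) hq0.le
      have h3 : (2 * v ^ (-(3:ℝ)/2)) ^ q = (2:ℝ)^q * v ^ ((-(3:ℝ)/2) * q) := by
        rw [Real.mul_rpow (by norm_num) (by positivity), Real.rpow_mul hv0.le]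
      calc ‖Gfun v ^ q‖ ≤ (2 * v ^ (-(3:ℝ)/2)) ^ q := le_trans h1 h2
        _ = (2:ℝ)^q * v ^ ((-(3:ℝ)/2) * q) := h3
  apply IntegrableOn.congr_fun hGint ?_ measurableSet_Ioi
  intro v hv
  simp only
  rw [inner_eq hv, Gfun]
end

section
/- For p > 4 the integral ∫₀^∞ [ ∫_ℝ (1/v) ( e^{−(1+w)²/(4v)} − e^{−w²/(4v)} )² dw ]^{p/(p−2)} dv is finite. -/
open MeasureTheory Real Set

lemma inner_eq (v : ℝ) (hv : 0 < v) :
    (∫ w : ℝ, (1 / v) * (Real.exp (-(1 + w) ^ 2 / (4 * v)) -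
        Real.exp (-w ^ 2 / (4 * v))) ^ 2)
    = (2 * Real.sqrt (2 * Real.pi * v) / v) * (1 - Real.exp (-(8 * v)⁻¹)) := by
  have hb : (0:ℝ) < (2*v)⁻¹ := by positivity
  have hv' : v ≠ 0 := hv.ne'
  have key : ∀ w : ℝ, (1 / v) * (Real.exp (-(1 + w) ^ 2 / (4 * v)) -
        Real.exp (-w ^ 2 / (4 * v))) ^ 2
      = (1/v) * Real.exp (-(2*v)⁻¹ * (w+1)^2)
        - (2 * Real.exp (-(8*v)⁻¹) / v) * Real.exp (-(2*v)⁻¹ * (w+2⁻¹)^2)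
        + (1/v) * Real.exp (-(2*v)⁻¹ * w^2) := by
    intro w
    have h1 : Real.exp (-(1 + w) ^ 2 / (4 * v)) ^ 2 = Real.exp (-(2*v)⁻¹ * (w+1)^2) := by
      rw [sq, ← Real.exp_add]; congr 1; field_simp; ring
    have h2 : Real.exp (-w ^ 2 / (4 * v)) ^ 2 = Real.exp (-(2*v)⁻¹ * w^2) := by
      rw [sq, ← Real.exp_add]; congr 1; field_simp; ring
    have h3 : Real.exp (-(1 + w) ^ 2 / (4 * v)) * Real.exp (-w ^ 2 / (4 * v))
        = Real.exp (-(8*v)⁻¹) * Real.exp (-(2*v)⁻¹ * (w+2⁻¹)^2) := by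
      rw [← Real.exp_add, ← Real.exp_add]; congr 1; field_simp; ring
    rw [sub_sq, h1, h2, mul_assoc 2, h3]; ring
  simp only [key]
  have hg : Integrable (fun w : ℝ => Real.exp (-(2*v)⁻¹ * w^2)) := integrable_exp_neg_mul_sq hb
  have hg1 : Integrable (fun w : ℝ => Real.exp (-(2*v)⁻¹ * (w+1)^2)) := hg.comp_add_right 1
  have hg2 : Integrable (fun w : ℝ => Real.exp (-(2*v)⁻¹ * (w+2⁻¹)^2)) := hg.comp_add_right 2⁻¹
  have hA : Integrable (fun w : ℝ => (1/v) * Real.exp (-(2*v)⁻¹ * (w+1)^2)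
      - (2 * Real.exp (-(8*v)⁻¹) / v) * Real.exp (-(2*v)⁻¹ * (w+2⁻¹)^2)) :=
    (hg1.const_mul _).sub (hg2.const_mul _)
  have hS : (∫ w : ℝ, Real.exp (-(2*v)⁻¹ * w^2)) = Real.sqrt (2 * Real.pi * v) := by
    rw [integral_gaussian]; congr 1; field_simp
  have hS1 : (∫ w : ℝ, Real.exp (-(2*v)⁻¹ * (w+1)^2)) = Real.sqrt (2 * Real.pi * v) := by
    rw [integral_add_right_eq_self (fun w : ℝ => Real.exp (-(2*v)⁻¹ * w^2)) 1, hS]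
  have hS2 : (∫ w : ℝ, Real.exp (-(2*v)⁻¹ * (w+2⁻¹)^2)) = Real.sqrt (2 * Real.pi * v) := by
    rw [integral_add_right_eq_self (fun w : ℝ => Real.exp (-(2*v)⁻¹ * w^2)) 2⁻¹, hS]
  rw [integral_add hA (hg.const_mul _),
      integral_sub (hg1.const_mul _) (hg2.const_mul _),
      integral_const_mul, integral_const_mul, integral_const_mul, hS, hS1, hS2]
  ring

/-- For `p > 4`, the scale-invariant integral
`∫₀^∞ [ ∫_ℝ (1/v) ( e^{−(1+w)²/(4v)} − e^{−w²/(4v)} )² dw ]^{p/(p−2)} dv` is finite. -/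
theorem stmt6 (p : ℝ) (hp : 4 < p) :
    IntegrableOn
      (fun v : ℝ =>
        (∫ w : ℝ,
            (1 / v) * (Real.exp (-(1 + w) ^ 2 / (4 * v)) -
              Real.exp (-w ^ 2 / (4 * v))) ^ 2) ^ (p / (p - 2)))
      (Set.Ioi (0:ℝ)) := by
  set q : ℝ := p / (p - 2) with hq
  have hp2 : (0:ℝ) < p - 2 := by linarith
  have hq1 : 1 < q := by rw [hq, lt_div_iff₀ hp2]; linarith
  have hq2 : q < 2 := by rw [hq, div_lt_iff₀ hp2]; linarith
  have hq0 : 0 < q := by linarith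
  set G : ℝ → ℝ := fun v =>
    ((2 * Real.sqrt (2 * Real.pi * v) / v) * (1 - Real.exp (-(8 * v)⁻¹))) ^ q with hG
  have hGcont : ContinuousOn G (Set.Ioi (0:ℝ)) := by
    apply ContinuousOn.rpow_const
    · apply ContinuousOn.mul
      · exact (continuousOn_const.mul
          ((Real.continuous_sqrt.comp (by continuity)).continuousOn)).div
          continuousOn_id (fun x hx => ne_of_gt hx)
      · exact continuousOn_const.sub
          (Real.continuous_exp.comp_continuousOn
            ((continuousOn_const.mul continuousOn_id).inv₀
              (fun x hx => mul_ne_zero (by norm_num) (ne_of_gt hx))).neg)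
    · intro x hx; right; exact hq0.le
  have hbase_nonneg : ∀ v : ℝ, 0 < v →
      0 ≤ (2 * Real.sqrt (2 * Real.pi * v) / v) * (1 - Real.exp (-(8 * v)⁻¹)) := by
    intro v hv
    have h1 : Real.exp (-(8 * v)⁻¹) ≤ 1 := by
      rw [Real.exp_le_one_iff]; simp; positivity
    have : (0:ℝ) ≤ 2 * Real.sqrt (2 * Real.pi * v) / v := by positivity
    nlinarith
  have hbase_eq : ∀ v : ℝ, 0 < v →
      2 * Real.sqrt (2 * Real.pi * v) / v = 2 * Real.sqrt (2 * Real.pi) * v ^ (-(1:ℝ)/2) := by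
    intro v hv
    have h : v ^ (-(1:ℝ)/2) = v ^ ((1:ℝ)/2) / v := by
      rw [eq_div_iff hv.ne', ← Real.rpow_add_one hv.ne']; norm_num
    rw [h, show (2 * Real.pi * v) = (2 * Real.pi) * v by ring,
      Real.sqrt_mul (by positivity), Real.sqrt_eq_rpow v]
    ring
  have hpow : ∀ v : ℝ, 0 < v → ∀ r : ℝ, (v ^ r) ^ q = v ^ (r * q) := by
    intro v hv r; rw [← Real.rpow_mul hv.le]
  -- bound on (0,1]
  have hGle1 : ∀ v ∈ Set.Ioc (0:ℝ) 1,
      G v ≤ (2 * Real.sqrt (2 * Real.pi)) ^ q * v ^ (-(1:ℝ)/2 * q) := by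
    intro v hv
    have hv0 : 0 < v := hv.1
    have h1 : 1 - Real.exp (-(8 * v)⁻¹) ≤ 1 := by
      have := Real.exp_pos (-(8 * v)⁻¹); linarith
    calc G v ≤ (2 * Real.sqrt (2 * Real.pi * v) / v) ^ q := by
          apply Real.rpow_le_rpow (hbase_nonneg v hv0) _ hq0.le
          have h2 : (0:ℝ) ≤ 2 * Real.sqrt (2 * Real.pi * v) / v := by positivity
          nlinarith
      _ = (2 * Real.sqrt (2 * Real.pi)) ^ q * v ^ (-(1:ℝ)/2 * q) := by
          rw [hbase_eq v hv0, Real.mul_rpow (by positivity) (Real.rpow_nonneg hv0.le _),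
            hpow v hv0]
  -- bound on [1,∞)
  have hGle2 : ∀ v ∈ Set.Ioi (1:ℝ),
      G v ≤ (2 * Real.sqrt (2 * Real.pi) / 8) ^ q * v ^ (-(3:ℝ)/2 * q) := by
    intro v hv
    have hv0 : (0:ℝ) < v := lt_trans one_pos hv
    have h1 : 1 - Real.exp (-(8 * v)⁻¹) ≤ (8 * v)⁻¹ := by
      have := Real.add_one_le_exp (-(8 * v)⁻¹)
      linarith
    calc G v ≤ (2 * Real.sqrt (2 * Real.pi) * v ^ (-(1:ℝ)/2) * (8 * v)⁻¹) ^ q := by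
          apply Real.rpow_le_rpow (hbase_nonneg v hv0) _ hq0.le
          rw [hbase_eq v hv0]
          have h2 : (0:ℝ) ≤ 2 * Real.sqrt (2 * Real.pi) * v ^ (-(1:ℝ)/2) := by positivity
          have h3 : 0 ≤ 1 - Real.exp (-(8 * v)⁻¹) := by
            have : Real.exp (-(8 * v)⁻¹) ≤ 1 := by
              rw [Real.exp_le_one_iff]; simp; positivity
            linarith
          exact mul_le_mul_of_nonneg_left h1 h2
      _ = (2 * Real.sqrt (2 * Real.pi) / 8) ^ q * v ^ (-(3:ℝ)/2 * q) := by
          have hv' : v ^ (-(1:ℝ)/2) * (8 * v)⁻¹ = 8⁻¹ * v ^ (-(3:ℝ)/2) := by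
            rw [mul_inv, show (-(3:ℝ)/2) = -(1:ℝ)/2 + (-1) by norm_num,
              Real.rpow_add hv0, Real.rpow_neg_one]
            ring
          rw [mul_assoc, hv', show 2 * Real.sqrt (2 * Real.pi) * (8⁻¹ * v ^ (-(3:ℝ)/2))
              = (2 * Real.sqrt (2 * Real.pi) / 8) * v ^ (-(3:ℝ)/2) by ring,
            Real.mul_rpow (by positivity) (Real.rpow_nonneg hv0.le _), hpow v hv0]
  -- integrability of G on each piece
  have hmeas1 : AEStronglyMeasurable G (volume.restrict (Set.Ioc (0:ℝ) 1)) :=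
    (hGcont.aestronglyMeasurable measurableSet_Ioi).mono_measure
      (Measure.restrict_mono Set.Ioc_subset_Ioi_self le_rfl)
  have hmeas2 : AEStronglyMeasurable G (volume.restrict (Set.Ioi (1:ℝ))) :=
    (hGcont.aestronglyMeasurable measurableSet_Ioi).mono_measure
      (Measure.restrict_mono (Set.Ioi_subset_Ioi zero_le_one) le_rfl)
  have hint1 : IntegrableOn G (Set.Ioc (0:ℝ) 1) := by
    have hrpow : IntegrableOn (fun v : ℝ => v ^ (-(1:ℝ)/2 * q)) (Set.Ioc (0:ℝ) 1) := by
      have h : (-1:ℝ) < -(1:ℝ)/2 * q := by nlinarith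
      have := intervalIntegral.intervalIntegrable_rpow' (a := 0) (b := 1) h
      rwa [intervalIntegrable_iff_integrableOn_Ioc_of_le zero_le_one] at this
    apply Integrable.mono' (hrpow.const_mul ((2 * Real.sqrt (2 * Real.pi)) ^ q)) hmeas1
    rw [ae_restrict_iff' measurableSet_Ioc]
    refine ae_of_all _ fun v hv => ?_
    rw [Real.norm_eq_abs, abs_of_nonneg (Real.rpow_nonneg (hbase_nonneg v hv.1) q)]
    exact hGle1 v hv
  have hint2 : IntegrableOn G (Set.Ioi (1:ℝ)) := by
    have hrpow : IntegrableOn (fun v : ℝ => v ^ (-(3:ℝ)/2 * q)) (Set.Ioi (1:ℝ)) := by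
      apply integrableOn_Ioi_rpow_of_lt _ one_pos
      nlinarith
    apply Integrable.mono' (hrpow.const_mul ((2 * Real.sqrt (2 * Real.pi) / 8) ^ q)) hmeas2
    rw [ae_restrict_iff' measurableSet_Ioi]
    refine ae_of_all _ fun v hv => ?_
    rw [Real.norm_eq_abs, abs_of_nonneg
      (Real.rpow_nonneg (hbase_nonneg v (lt_trans one_pos hv)) q)]
    exact hGle2 v hv
  have hGint : IntegrableOn G (Set.Ioi (0:ℝ)) := by
    rw [← Set.Ioc_union_Ioi_eq_Ioi zero_le_one]
    exact hint1.union hint2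
  apply hGint.congr_fun _ measurableSet_Ioi
  intro v hv
  dsimp only
  rw [inner_eq v hv]
end

section
/- Let r ∈ ℝ, T > 0. Suppose u ∈ L¹([0,T]; 𝓛_r), where 𝓛_r is the space of measurable functions f on [0,∞) with ‖f‖_{𝓛_r} = sup_{x≥0} e^{−rx}|f(x)| < ∞. Define w(τ,x) = ∫₀^τ ∫₀^∞ G(τ−s,x,y) u(s,y) dy ds with G the Dirichlet heat kernel on [0,∞). Then there is a constant C = C(r,T) with sup_{τ∈[0,t]} sup_{x≥0} e^{−rx} |w(τ,x)| ≤ C ∫₀^t ‖u(s,·)‖_{𝓛_r} ds for all t ∈ [0,T]. -/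
open MeasureTheory Set

/-- The Dirichlet heat kernel on `[0,∞)`. -/
noncomputable def Gker (t x y : ℝ) : ℝ :=
  (Real.sqrt (4 * Real.pi * t))⁻¹ *
    (Real.exp (-(x - y) ^ 2 / (4 * t)) - Real.exp (-(x + y) ^ 2 / (4 * t)))

/-- The `𝓛_r` norm `‖f‖_{𝓛_r} = sup_{x ≥ 0} e^{−rx} |f(x)|`. -/
noncomputable def LrNorm (r : ℝ) (f : ℝ → ℝ) : ℝ :=
  ⨆ x : {x : ℝ // 0 ≤ x}, Real.exp (-r * x) * |f x|

lemma gauss_int {t : ℝ} (ht : 0 < t) (c : ℝ) :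
    ∫ y : ℝ, Real.exp (-(y - c) ^ 2 / (4 * t)) = Real.sqrt (4 * Real.pi * t) := by
  have h1 : ∀ y : ℝ, Real.exp (-(y - c) ^ 2 / (4 * t))
      = Real.exp (-(1 / (4 * t)) * (y - c) ^ 2) := by
    intro y; congr 1; field_simp
  simp_rw [h1]
  rw [integral_sub_right_eq_self (fun y => Real.exp (-(1 / (4 * t)) * y ^ 2)) c,
    integral_gaussian]
  congr 1
  field_simp

lemma gauss_integrable {t : ℝ} (ht : 0 < t) (c : ℝ) :
    Integrable (fun y : ℝ => Real.exp (-(y - c) ^ 2 / (4 * t))) := by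
  have h1 : ∀ y : ℝ, Real.exp (-(y - c) ^ 2 / (4 * t))
      = Real.exp (-(1 / (4 * t)) * (y - c) ^ 2) := by
    intro y; congr 1; field_simp
  simp_rw [h1]
  exact (integrable_exp_neg_mul_sq (by positivity)).comp_sub_right c

lemma gker_nonneg {t x y : ℝ} (hx : 0 ≤ x) (hy : 0 ≤ y) : 0 ≤ Gker t x y := by
  rcases le_or_gt t 0 with ht | ht
  · have hpt : Real.pi * t ≤ 0 := mul_nonpos_of_nonneg_of_nonpos Real.pi_pos.le ht
    have h0 : Real.sqrt (4 * Real.pi * t) = 0 := by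
      apply Real.sqrt_eq_zero_of_nonpos
      nlinarith
    simp [Gker, h0]
  · have h4t : (0:ℝ) < 4 * t := by linarith
    apply mul_nonneg (by positivity)
    rw [sub_nonneg]
    apply Real.exp_le_exp.2
    exact (div_le_div_iff_of_pos_right h4t).mpr (by nlinarith)

lemma gker_le {t x y : ℝ} (ht : 0 < t) :
    Gker t x y ≤ (Real.sqrt (4 * Real.pi * t))⁻¹ * Real.exp (-(x - y) ^ 2 / (4 * t)) := by
  have h : Gker t x y ≤ (Real.sqrt (4 * Real.pi * t))⁻¹ *
      (Real.exp (-(x - y) ^ 2 / (4 * t)) - 0) := by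
    apply mul_le_mul_of_nonneg_left _ (by positivity)
    gcongr
    exact (Real.exp_pos _).le
  simpa using h

/-- Completing the square identity. -/
lemma complete_square {t : ℝ} (ht : 0 < t) (r x y : ℝ) :
    Real.exp (r * y) * Real.exp (-(x - y) ^ 2 / (4 * t)) =
      Real.exp (r * x) * (Real.exp (r ^ 2 * t) *
        Real.exp (-(y - (x + 2 * r * t)) ^ 2 / (4 * t))) := by
  rw [← Real.exp_add, ← Real.exp_add, ← Real.exp_add]
  congr 1
  field_simp
  ring

lemma lrnorm_le {r : ℝ} {f : ℝ → ℝ}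
    (hb : BddAbove (Set.range fun x : {x : ℝ // 0 ≤ x} => Real.exp (-r * x) * |f x|))
    {y : ℝ} (hy : 0 ≤ y) : Real.exp (-r * y) * |f y| ≤ LrNorm r f :=
  le_ciSup hb ⟨y, hy⟩

lemma lrnorm_nonneg {r : ℝ} {f : ℝ → ℝ}
    (hb : BddAbove (Set.range fun x : {x : ℝ // 0 ≤ x} => Real.exp (-r * x) * |f x|)) :
    0 ≤ LrNorm r f :=
  le_trans (by positivity) (lrnorm_le hb le_rfl)

/-- The key kernel estimate: inner integral bound. -/
lemma inner_bound (r : ℝ) {t x : ℝ} (ht : 0 < t) (hx : 0 ≤ x) (u : ℝ → ℝ)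
    (hb : BddAbove (Set.range fun z : {z : ℝ // 0 ≤ z} => Real.exp (-r * z) * |u z|)) :
    ‖∫ y in Set.Ioi (0:ℝ), Gker t x y * u y‖ ≤
      LrNorm r u * Real.exp (r * x) * Real.exp (r ^ 2 * t) := by
  set N := LrNorm r u with hN
  have hN0 : 0 ≤ N := lrnorm_nonneg hb
  set c := x + 2 * r * t with hc
  set B : ℝ → ℝ := fun y =>
    N * Real.exp (r * x) * ((Real.sqrt (4 * Real.pi * t))⁻¹ * Real.exp (r ^ 2 * t) *
      Real.exp (-(y - c) ^ 2 / (4 * t))) with hB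
  have hBint : Integrable B := (((gauss_integrable ht c).const_mul _).const_mul _)
  have hbound : ∀ y ∈ Set.Ioi (0:ℝ), ‖Gker t x y * u y‖ ≤ B y := by
    intro y hy
    have hy0 : (0:ℝ) ≤ y := le_of_lt hy
    have hu : |u y| ≤ N * Real.exp (r * y) := by
      have h := lrnorm_le hb hy0
      have heq : |u y| = Real.exp (r * y) * (Real.exp (-r * y) * |u y|) := by
        rw [← mul_assoc, ← Real.exp_add]
        simp
      rw [heq]
      calc Real.exp (r * y) * (Real.exp (-r * y) * |u y|)
          ≤ Real.exp (r * y) * N := mul_le_mul_of_nonneg_left h (Real.exp_pos _).le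
        _ = N * Real.exp (r * y) := mul_comm _ _
    have hG : |Gker t x y| ≤ (Real.sqrt (4 * Real.pi * t))⁻¹ *
        Real.exp (-(x - y) ^ 2 / (4 * t)) := by
      rw [abs_of_nonneg (gker_nonneg hx hy0)]
      exact gker_le ht
    calc ‖Gker t x y * u y‖ = |Gker t x y| * |u y| := abs_mul _ _
      _ ≤ ((Real.sqrt (4 * Real.pi * t))⁻¹ * Real.exp (-(x - y) ^ 2 / (4 * t))) *
            (N * Real.exp (r * y)) :=
          mul_le_mul hG hu (abs_nonneg _) (by positivity)
      _ = N * (Real.sqrt (4 * Real.pi * t))⁻¹ *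
            (Real.exp (r * y) * Real.exp (-(x - y) ^ 2 / (4 * t))) := by ring
      _ = B y := by
          rw [complete_square ht r x y]
          simp only [hB]
          ring
  have h1 : ‖∫ y in Set.Ioi (0:ℝ), Gker t x y * u y‖ ≤ ∫ y in Set.Ioi (0:ℝ), B y := by
    apply norm_integral_le_of_norm_le hBint.integrableOn
    filter_upwards [ae_restrict_mem measurableSet_Ioi] with y hy using hbound y hy
  have h2 : ∫ y in Set.Ioi (0:ℝ), B y ≤ ∫ y : ℝ, B y := by
    apply setIntegral_le_integral hBint
    filter_upwards with y
    simp only [hB]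
    positivity
  have h3 : ∫ y : ℝ, B y = N * Real.exp (r * x) * Real.exp (r ^ 2 * t) := by
    simp only [hB]
    rw [integral_const_mul, integral_const_mul, gauss_int ht c]
    have hs : Real.sqrt (4 * Real.pi * t) ≠ 0 := by positivity
    field_simp
  calc ‖∫ y in Set.Ioi (0:ℝ), Gker t x y * u y‖ ≤ ∫ y in Set.Ioi (0:ℝ), B y := h1
    _ ≤ ∫ y : ℝ, B y := h2
    _ = N * Real.exp (r * x) * Real.exp (r ^ 2 * t) := h3

/-- If `u ∈ L¹([0,T]; 𝓛_r)` and `w(τ,x) = ∫₀^τ ∫₀^∞ G(τ−s,x,y) u(s,y) dy ds`, then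
`sup_{τ∈[0,t]} sup_{x≥0} e^{−rx} |w(τ,x)| ≤ C(r,T) ∫₀^t ‖u(s,·)‖_{𝓛_r} ds` for `t ∈ [0,T]`. -/
theorem stmt16 (r T : ℝ) (hT : 0 < T) :
    ∃ C > 0, ∀ u : ℝ → ℝ → ℝ,
      Measurable (fun pr : ℝ × ℝ => u pr.1 pr.2) →
      (∀ s ∈ Icc (0:ℝ) T,
        BddAbove (Set.range fun x : {x : ℝ // 0 ≤ x} => Real.exp (-r * x) * |u s x|)) →
      IntegrableOn (fun s => LrNorm r (u s)) (Icc (0:ℝ) T) →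
      ∀ t ∈ Icc (0:ℝ) T, ∀ τ ∈ Icc (0:ℝ) t, ∀ x : ℝ, 0 ≤ x →
        Real.exp (-r * x) *
            |∫ s in (0:ℝ)..τ, ∫ y in Set.Ioi (0:ℝ), Gker (τ - s) x y * u s y| ≤
          C * ∫ s in (0:ℝ)..t, LrNorm r (u s) := by
  refine ⟨Real.exp (r ^ 2 * T), Real.exp_pos _, ?_⟩
  intro u hmeas hbdd hInt t ht τ hτ x hx
  obtain ⟨ht0, htT⟩ := ht
  obtain ⟨hτ0, hτt⟩ := hτ
  have hτT : τ ≤ T := hτt.trans htT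
  set N : ℝ → ℝ := fun s => LrNorm r (u s) with hNdef
  have hNnn : ∀ s ∈ Icc (0:ℝ) T, 0 ≤ N s := fun s hs => lrnorm_nonneg (hbdd s hs)
  have hNint : ∀ b, 0 ≤ b → b ≤ T → IntervalIntegrable N volume 0 b := by
    intro b hb0 hbT
    rw [intervalIntegrable_iff, uIoc_of_le hb0]
    exact hInt.mono_set (Ioc_subset_Icc_self.trans (Icc_subset_Icc le_rfl hbT))
  set Fb : ℝ → ℝ := fun s => Real.exp (r ^ 2 * T) * Real.exp (r * x) * N s with hFb
  have hFbint : IntervalIntegrable Fb volume 0 τ := ((hNint τ hτ0 hτT).const_mul _)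
  have houter : ‖∫ s in (0:ℝ)..τ, ∫ y in Set.Ioi (0:ℝ), Gker (τ - s) x y * u s y‖ ≤
      |∫ s in (0:ℝ)..τ, Fb s| := by
    apply intervalIntegral.norm_integral_le_abs_of_norm_le _ hFbint
    rw [uIoc_of_le hτ0]
    filter_upwards [ae_restrict_mem measurableSet_Ioc] with s hs
    obtain ⟨hs0, hsτ⟩ := hs
    have hsT : s ∈ Icc (0:ℝ) T := ⟨hs0.le, hsτ.trans hτT⟩
    have hNs : 0 ≤ N s := hNnn s hsT
    have hFbnn : 0 ≤ Fb s := by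
      simp only [hFb]
      positivity
    rcases eq_or_lt_of_le (sub_nonneg.2 hsτ : (0:ℝ) ≤ τ - s) with h0 | hpos
    · have hz : ∀ y, Gker (τ - s) x y = 0 := by
        intro y
        simp [Gker, ← h0]
      simp only [hz, zero_mul, integral_zero, norm_zero]
      exact hFbnn
    · have hb := inner_bound r hpos hx (u s) (hbdd s hsT)
      refine hb.trans ?_
      have hexp : Real.exp (r ^ 2 * (τ - s)) ≤ Real.exp (r ^ 2 * T) := by
        apply Real.exp_le_exp.2
        nlinarith [sq_nonneg r]
      calc LrNorm r (u s) * Real.exp (r * x) * Real.exp (r ^ 2 * (τ - s))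
          ≤ LrNorm r (u s) * Real.exp (r * x) * Real.exp (r ^ 2 * T) :=
            mul_le_mul_of_nonneg_left hexp (mul_nonneg hNs (Real.exp_pos _).le)
        _ = Fb s := by simp only [hFb]; ring
  have hFbabs : |∫ s in (0:ℝ)..τ, Fb s| = ∫ s in (0:ℝ)..τ, Fb s := by
    apply abs_of_nonneg
    apply intervalIntegral.integral_nonneg hτ0
    intro s hs
    have := hNnn s ⟨hs.1, hs.2.trans hτT⟩
    simp only [hFb]
    positivity
  have hFbval : ∫ s in (0:ℝ)..τ, Fb s =
      Real.exp (r ^ 2 * T) * Real.exp (r * x) * ∫ s in (0:ℝ)..τ, N s := by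
    simp only [hFb]
    rw [intervalIntegral.integral_const_mul]
  have hmono : ∫ s in (0:ℝ)..τ, N s ≤ ∫ s in (0:ℝ)..t, N s := by
    apply intervalIntegral.integral_mono_interval le_rfl hτ0 hτt
    · filter_upwards [ae_restrict_mem measurableSet_Ioc] with s hs
      exact hNnn s ⟨hs.1.le, hs.2.trans htT⟩
    · exact hNint t ht0 htT
  have hone : Real.exp (-r * x) * Real.exp (r * x) = 1 := by
    rw [← Real.exp_add]; simp
  set Iτ := ∫ s in (0:ℝ)..τ, N s with hIτ
  calc Real.exp (-r * x) * |∫ s in (0:ℝ)..τ, ∫ y in Set.Ioi (0:ℝ), Gker (τ - s) x y * u s y|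
      ≤ Real.exp (-r * x) * |∫ s in (0:ℝ)..τ, Fb s| :=
        mul_le_mul_of_nonneg_left houter (Real.exp_pos _).le
    _ = Real.exp (-r * x) * (Real.exp (r ^ 2 * T) * Real.exp (r * x) * Iτ) := by
        rw [hFbabs, hFbval]
    _ = (Real.exp (-r * x) * Real.exp (r * x)) * (Real.exp (r ^ 2 * T) * Iτ) := by ring
    _ = Real.exp (r ^ 2 * T) * Iτ := by rw [hone, one_mul]
    _ ≤ Real.exp (r ^ 2 * T) * ∫ s in (0:ℝ)..t, N s :=
        mul_le_mul_of_nonneg_left hmono (Real.exp_pos _).le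
end
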